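/- Duality of the vector-valued Schatten norm at α ≥ 1: for a positive semidefinite operator X_{AB}, ‖X‖_{S₁(B, S_∞(A))} = inf { λ ∈ ℝ : there exists a density operator σ_B with X_{AB} ≤ λ I_A ⊗ σ_B }, i.e. exp(−H_min(A|B)_X) equals the infimum over densities σ_B of the smallest λ such that X ≤ λ I ⊗ σ. -/

import Mathlib

open scoped Kronecker
open Matrix MeasureTheory
open scoped ComplexOrder
open scoped ENNReal

noncomputable section

instance matMeasurableSpace {n m : Type*} : MeasurableSpace (Matrix n m ℂ) :=
  inferInstanceAs (MeasurableSpace (n → m → ℂ))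

instance unitaryMeasurableSpace {n : Type*} [Fintype n] [DecidableEq n] :
    MeasurableSpace (Matrix.unitaryGroup n ℂ) :=
  inferInstanceAs (MeasurableSpace {U : Matrix n n ℂ // U ∈ Matrix.unitaryGroup n ℂ})

variable {n : Type*} [Fintype n] [DecidableEq n]

/-- Functional calculus for Hermitian matrices (junk value `0` otherwise). -/
def hfun (f : ℝ → ℝ) (X : Matrix n n ℂ) : Matrix n n ℂ :=
  if hX : X.IsHermitian then
    (hX.eigenvectorUnitary : Matrix n n ℂ) *
      Matrix.diagonal (fun i => (f (hX.eigenvalues i) : ℂ)) *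
      (star (hX.eigenvectorUnitary : Matrix n n ℂ))
  else 0

/-- Real matrix power via spectral calculus, with the pseudo-inverse convention `0 ^ t = 0`. -/
def mpow (X : Matrix n n ℂ) (t : ℝ) : Matrix n n ℂ :=
  hfun (fun x => if x = 0 then 0 else Real.rpow x t) X

/-- Matrix logarithm on the support. -/
def mlog (X : Matrix n n ℂ) : Matrix n n ℂ :=
  hfun (fun x => if x = 0 then 0 else Real.log x) X

/-- Trace norm (Schatten 1-norm). -/
def traceNorm (X : Matrix n n ℂ) : ℝ :=
  (((Matrix.posSemidef_conjTranspose_mul_self X).1.eigenvectorUnitary : Matrix n n ℂ) *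
    Matrix.diagonal (fun i => ((Real.sqrt ((Matrix.posSemidef_conjTranspose_mul_self X).1.eigenvalues i) : ℝ) : ℂ)) *
    (star ((Matrix.posSemidef_conjTranspose_mul_self X).1.eigenvectorUnitary : Matrix n n ℂ))).trace.re

/-- Squared Hilbert–Schmidt (Schatten 2) norm. -/
def hsNormSq (X : Matrix n n ℂ) : ℝ := ∑ i, ∑ j, ‖X i j‖ ^ 2

/-- Operator norm (Schatten ∞-norm): square root of the top eigenvalue of `Xᴴ * X`. -/
def opNorm (X : Matrix n n ℂ) : ℝ :=
  ⨆ i, Real.sqrt ((Matrix.posSemidef_conjTranspose_mul_self X).1.eigenvalues i)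

/-- Schatten `α`-norm for real `α`. -/
def schattenR (α : ℝ) (X : Matrix n n ℂ) : ℝ :=
  ((mpow (Xᴴ * X) (α / 2)).trace.re) ^ (1 / α)

/-- Partial trace over the first tensor factor. -/
def ptrFst {a b : Type*} [Fintype a] (X : Matrix (a × b) (a × b) ℂ) : Matrix b b ℂ :=
  Matrix.of fun j j' => ∑ i, X (i, j) (i, j')

/-- A density operator. -/
def IsDensity (X : Matrix n n ℂ) : Prop := X.PosSemidef ∧ X.trace = 1

/-- Swap (flip) operator on `A ⊗ A`. -/
def swapM (a : Type*) [Fintype a] [DecidableEq a] : Matrix (a × a) (a × a) ℂ :=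
  Matrix.of fun p q => if p.1 = q.2 ∧ p.2 = q.1 then 1 else 0

/-- Normalized maximally entangled state `Φ = (1/d) Σ_{i j} |ii⟩⟨jj|`. -/
def phiM (a : Type*) [Fintype a] [DecidableEq a] : Matrix (a × a) (a × a) ℂ :=
  Matrix.of fun p q => if p.1 = p.2 ∧ q.1 = q.2 then ((Fintype.card a : ℂ))⁻¹ else 0

/-- Non-normalized maximally entangled operator `Φ̃ = Σ_{i j} |ii⟩⟨jj|`. -/
def phiTilde (a : Type*) [Fintype a] [DecidableEq a] : Matrix (a × a) (a × a) ℂ :=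
  Matrix.of fun p q => if p.1 = p.2 ∧ q.1 = q.2 then 1 else 0

/-- Entrywise integral of a matrix-valued function. -/
def mInt {G : Type*} [MeasurableSpace G] (μ : Measure G)
    (f : G → Matrix n n ℂ) : Matrix n n ℂ :=
  Matrix.of fun i j => ∫ x, f x i j ∂μ

/-- Choi state (normalized Choi–Jamiołkowski matrix) of a map `T`, on `A' ⊗ C`. -/
def choiM {a c : Type*} [Fintype a] [DecidableEq a]
    (T : Matrix a a ℂ → Matrix c c ℂ) : Matrix (a × c) (a × c) ℂ :=
  Matrix.of fun p q =>
    ((Fintype.card a : ℂ))⁻¹ * (T (Matrix.single p.1 q.1 1)) p.2 q.2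

/-- The extension `T ⊗ id_E` of a map `T : B(A) → B(C)` applied to an operator on `A ⊗ E`. -/
def tensorExt {a c e : Type*} [Fintype a] [DecidableEq a]
    (T : Matrix a a ℂ → Matrix c c ℂ) (ρ : Matrix (a × e) (a × e) ℂ) :
    Matrix (c × e) (c × e) ℂ :=
  Matrix.of fun p q => ∑ i, ∑ j,
    (T (Matrix.single i j 1)) p.1 q.1 * ρ (i, p.2) (j, q.2)

/-- `T` is trace preserving. -/
def IsTracePreserving {a c : Type*} [Fintype a] [Fintype c]
    (T : Matrix a a ℂ → Matrix c c ℂ) : Prop :=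
  ∀ X, (T X).trace = X.trace

/-- The decoupling map `Θ(Y)(U) = d² ⟨Φ_{A'A}| (1 ⊗ U ⊗ 1) Y (1 ⊗ U† ⊗ 1) |Φ_{A'A}⟩`,
where `Y` is an operator on `A' ⊗ A ⊗ R` (with `R` e.g. `C ⊗ E`). -/
def Theta {a r : Type*} [Fintype a] [DecidableEq a] [Fintype r] [DecidableEq r]
    (Y : Matrix ((a × a) × r) ((a × a) × r) ℂ) (U : Matrix.unitaryGroup a ℂ) :
    Matrix r r ℂ :=
  (Fintype.card a : ℂ) • Matrix.of fun x y => ∑ i, ∑ j,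
    ((((1 : Matrix a a ℂ) ⊗ₖ (U : Matrix a a ℂ)) ⊗ₖ (1 : Matrix r r ℂ)) * Y *
      ((((1 : Matrix a a ℂ) ⊗ₖ (U : Matrix a a ℂ)) ⊗ₖ (1 : Matrix r r ℂ))ᴴ)) ((i, i), x) ((j, j), y)

/-- The completely depolarizing map acting on the `A` factor of `A' ⊗ A ⊗ R`. -/
def depolA {a r : Type*} [Fintype a] [DecidableEq a]
    (Y : Matrix ((a × a) × r) ((a × a) × r) ℂ) : Matrix ((a × a) × r) ((a × a) × r) ℂ :=
  Matrix.of fun p q =>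
    if p.1.2 = q.1.2 then
      ((Fintype.card a : ℂ))⁻¹ * ∑ k, Y ((p.1.1, k), p.2) ((q.1.1, k), q.2)
    else 0

/-- Sandwiched Rényi divergence `D*_α(ρ ‖ τ) = (1/(α-1)) log Tr[(τ^{(1-α)/(2α)} ρ τ^{(1-α)/(2α)})^α]`. -/
def sandD {m : Type*} [Fintype m] [DecidableEq m] (α : ℝ) (ρ τ : Matrix m m ℂ) : ℝ :=
  (α - 1)⁻¹ * Real.log
    ((mpow (mpow τ ((1 - α) / (2 * α)) * ρ * mpow τ ((1 - α) / (2 * α))) α).trace.re)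

/-- Sandwiched Rényi conditional entropy
`H*_α(A|B)_ρ = - inf_{σ_B density} D*_α(ρ ‖ 1 ⊗ σ_B)`, conditioning on the second factor. -/
def condSand {a b : Type*} [Fintype a] [DecidableEq a] [Fintype b] [DecidableEq b]
    (α : ℝ) (ρ : Matrix (a × b) (a × b) ℂ) : ℝ :=
  - sInf ((fun σ : Matrix b b ℂ => sandD α ρ ((1 : Matrix a a ℂ) ⊗ₖ σ)) '' {σ | IsDensity σ})

/-- Petz–Rényi conditional entropy
`H_α^↓(A|B)_ρ = (1/(1-α)) log Tr[ρ^α (1 ⊗ ρ_B)^{1-α}]`, conditioning on the second factor. -/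
def petzCond {a b : Type*} [Fintype a] [DecidableEq a] [Fintype b] [DecidableEq b]
    (α : ℝ) (ρ : Matrix (a × b) (a × b) ℂ) : ℝ :=
  (1 - α)⁻¹ * Real.log
    ((mpow ρ α * mpow ((1 : Matrix a a ℂ) ⊗ₖ ptrFst ρ) (1 - α)).trace.re)

/-- Conditional von Neumann entropy `H(A|B)_ρ`. -/
def condVN {a b : Type*} [Fintype a] [DecidableEq a] [Fintype b] [DecidableEq b]
    (ρ : Matrix (a × b) (a × b) ℂ) : ℝ :=
  - ((ρ * (mlog ρ - mlog ((1 : Matrix a a ℂ) ⊗ₖ ptrFst ρ))).trace.re)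


section AuxLemmas

variable {m : Type*} [Fintype m] [DecidableEq m]

lemma psd_smul {M : Matrix m m ℂ} (hM : M.PosSemidef) {c : ℝ} (hc : 0 ≤ c) :
    ((c : ℂ) • M).PosSemidef := by
  constructor
  · have := hM.1
    unfold Matrix.IsHermitian at *
    rw [Matrix.conjTranspose_smul, this]
    congr 1
    simp [Complex.conj_ofReal]
  · exact (hM.smul (Complex.zero_le_real.mpr hc)).2

lemma unitary_conj_diag_psd_iff {U : Matrix m m ℂ} (hU : U ∈ Matrix.unitaryGroup m ℂ)
    (d : m → ℂ) :
    (U * Matrix.diagonal d * star U).PosSemidef ↔ ∀ i, 0 ≤ d i := by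
  have hU1 : star U * U = 1 := (Unitary.mem_iff.mp hU).1
  constructor
  · intro h
    have h2 := h.conjTranspose_mul_mul_same U
    have h3 : Uᴴ * (U * Matrix.diagonal d * star U) * U = Matrix.diagonal d := by
      rw [Matrix.star_eq_conjTranspose]
      calc Uᴴ * (U * Matrix.diagonal d * Uᴴ) * U
          = (Uᴴ * U) * Matrix.diagonal d * (Uᴴ * U) := by noncomm_ring
        _ = Matrix.diagonal d := by
            rw [Matrix.star_eq_conjTranspose] at hU1
            rw [hU1, one_mul, mul_one]
    rw [h3] at h2
    exact Matrix.posSemidef_diagonal_iff.mp h2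
  · intro h
    have := (Matrix.posSemidef_diagonal_iff.mpr h).mul_mul_conjTranspose_same U
    rwa [Matrix.star_eq_conjTranspose]

lemma unitary_conj_diag_mul {U : Matrix m m ℂ} (hU : U ∈ Matrix.unitaryGroup m ℂ)
    (d e : m → ℂ) :
    (U * Matrix.diagonal d * star U) * (U * Matrix.diagonal e * star U) =
      U * Matrix.diagonal (fun i => d i * e i) * star U := by
  have hU1 : star U * U = 1 := (Unitary.mem_iff.mp hU).1
  have hde : (Matrix.diagonal (fun i => d i * e i) : Matrix m m ℂ)
      = Matrix.diagonal d * Matrix.diagonal e := by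
    rw [Matrix.diagonal_mul_diagonal]
  rw [hde]
  calc (U * Matrix.diagonal d * star U) * (U * Matrix.diagonal e * star U)
      = U * Matrix.diagonal d * (star U * U) * Matrix.diagonal e * star U := by noncomm_ring
    _ = U * (Matrix.diagonal d * Matrix.diagonal e) * star U := by
        rw [hU1, mul_one]; noncomm_ring

lemma hfun_of_isHermitian {X : Matrix m m ℂ} (hX : X.IsHermitian) (f : ℝ → ℝ) :
    hfun f X = (hX.eigenvectorUnitary : Matrix m m ℂ) *
      Matrix.diagonal (fun i => (f (hX.eigenvalues i) : ℂ)) *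
      (star (hX.eigenvectorUnitary : Matrix m m ℂ)) := dif_pos hX

lemma hfun_mul_hfun {X : Matrix m m ℂ} (hX : X.IsHermitian) (f g : ℝ → ℝ) :
    hfun f X * hfun g X = hfun (fun x => f x * g x) X := by
  rw [hfun_of_isHermitian hX f, hfun_of_isHermitian hX g, hfun_of_isHermitian hX,
    unitary_conj_diag_mul (hX.eigenvectorUnitary).2]
  have hd : (fun i => ((f (hX.eigenvalues i) : ℝ) : ℂ) * ((g (hX.eigenvalues i) : ℝ) : ℂ))
      = fun i => (((fun x => f x * g x) (hX.eigenvalues i) : ℝ) : ℂ) := by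
    funext i; push_cast; ring
  rw [hd]

lemma hfun_congr {X : Matrix m m ℂ} (hX : X.IsHermitian) {f g : ℝ → ℝ}
    (h : ∀ i, f (hX.eigenvalues i) = g (hX.eigenvalues i)) :
    hfun f X = hfun g X := by
  rw [hfun_of_isHermitian hX f, hfun_of_isHermitian hX g]
  have hd : (fun i => ((f (hX.eigenvalues i) : ℝ) : ℂ))
      = fun i => ((g (hX.eigenvalues i) : ℝ) : ℂ) := by
    funext i; rw [h i]
  rw [hd]

lemma hfun_eq_one {X : Matrix m m ℂ} (hX : X.IsHermitian) {f : ℝ → ℝ}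
    (h : ∀ i, f (hX.eigenvalues i) = 1) :
    hfun f X = 1 := by
  have hU2 : (hX.eigenvectorUnitary : Matrix m m ℂ) * star (hX.eigenvectorUnitary : Matrix m m ℂ) = 1 :=
    (Unitary.mem_iff.mp (hX.eigenvectorUnitary).2).2
  rw [hfun_of_isHermitian hX f]
  have : (Matrix.diagonal (fun i => ((f (hX.eigenvalues i) : ℝ) : ℂ)) : Matrix m m ℂ) = 1 := by
    have hd : (fun i => ((f (hX.eigenvalues i) : ℝ) : ℂ)) = fun _ : m => (1 : ℂ) := by
      funext i
      rw [h i]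
      norm_num
    rw [hd, Matrix.diagonal_one]
  rw [this, mul_one, hU2]

lemma hfun_eq_self {X : Matrix m m ℂ} (hX : X.IsHermitian) {f : ℝ → ℝ}
    (h : ∀ i, f (hX.eigenvalues i) = hX.eigenvalues i) :
    hfun f X = X := by
  rw [hfun_of_isHermitian hX f]
  have hd : (fun i => ((f (hX.eigenvalues i) : ℝ) : ℂ))
      = (RCLike.ofReal ∘ hX.eigenvalues : m → ℂ) := by
    funext i; rw [h i]; rfl
  have hsp := hX.spectral_theorem
  rw [Unitary.conjStarAlgAut_apply] at hsp
  rw [hd, ← hsp]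

lemma hfun_isHermitian {X : Matrix m m ℂ} (hX : X.IsHermitian) (f : ℝ → ℝ) :
    (hfun f X).IsHermitian := by
  rw [hfun_of_isHermitian hX f]
  have hD : (Matrix.diagonal (fun i => ((f (hX.eigenvalues i) : ℝ) : ℂ)) : Matrix m m ℂ)ᴴ
      = Matrix.diagonal (fun i => ((f (hX.eigenvalues i) : ℝ) : ℂ)) := by
    rw [Matrix.diagonal_conjTranspose]
    have hs : star (fun i => ((f (hX.eigenvalues i) : ℝ) : ℂ))
        = fun i => ((f (hX.eigenvalues i) : ℝ) : ℂ) := by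
      funext i
      simp [Complex.conj_ofReal]
    rw [hs]
  show (_ * _ * _)ᴴ = _
  rw [Matrix.star_eq_conjTranspose, Matrix.conjTranspose_mul, Matrix.conjTranspose_mul,
    Matrix.conjTranspose_conjTranspose, hD, ← Matrix.mul_assoc]

lemma mpow_isHermitian {X : Matrix m m ℂ} (hX : X.IsHermitian) (t : ℝ) :
    (mpow X t).IsHermitian := hfun_isHermitian hX _

lemma mpow_mul_mpow {σ : Matrix m m ℂ} (hσ : σ.PosDef) (s t : ℝ) :
    mpow σ s * mpow σ t = hfun (fun x => if x = 0 then 0 else Real.rpow x (s + t)) σ := by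
  unfold mpow
  rw [hfun_mul_hfun hσ.1]
  apply hfun_congr hσ.1
  intro i
  have hpos := hσ.eigenvalues_pos i
  simp only [if_neg hpos.ne']
  exact (Real.rpow_add hpos s t).symm

lemma mpow_half_mul_neg_half {σ : Matrix m m ℂ} (hσ : σ.PosDef) :
    mpow σ (1/2) * mpow σ (-(1/2)) = 1 := by
  rw [mpow_mul_mpow hσ]
  apply hfun_eq_one hσ.1
  intro i
  have hpos := hσ.eigenvalues_pos i
  simp only [if_neg hpos.ne']
  norm_num [Real.rpow_zero]

lemma mpow_neg_half_mul_half {σ : Matrix m m ℂ} (hσ : σ.PosDef) :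
    mpow σ (-(1/2)) * mpow σ (1/2) = 1 := by
  rw [mpow_mul_mpow hσ]
  apply hfun_eq_one hσ.1
  intro i
  have hpos := hσ.eigenvalues_pos i
  simp only [if_neg hpos.ne']
  norm_num [Real.rpow_zero]

lemma mpow_half_mul_half {σ : Matrix m m ℂ} (hσ : σ.PosDef) :
    mpow σ (1/2) * mpow σ (1/2) = σ := by
  rw [mpow_mul_mpow hσ]
  apply hfun_eq_self hσ.1
  intro i
  have hpos := hσ.eigenvalues_pos i
  simp only [if_neg hpos.ne']
  norm_num [Real.rpow_one]

lemma smul_one_sub_conj {U : Matrix m m ℂ} (hU : U ∈ Matrix.unitaryGroup m ℂ)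
    {M : Matrix m m ℂ} {d : m → ℝ} (c : ℝ)
    (hM : M = U * Matrix.diagonal (fun i => ((d i : ℝ) : ℂ)) * star U) :
    (c : ℂ) • (1 : Matrix m m ℂ) - M =
      U * Matrix.diagonal (fun i => ((c - d i : ℝ) : ℂ)) * star U := by
  have hU2 : U * star U = 1 := (Unitary.mem_iff.mp hU).2
  have h1 : U * Matrix.diagonal (fun _ : m => (c : ℂ)) * star U =
      (c : ℂ) • (1 : Matrix m m ℂ) := by
    have hc1 : (Matrix.diagonal (fun _ : m => (c : ℂ)) : Matrix m m ℂ) = (c : ℂ) • 1 := by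
      have hs : ((c : ℂ) • (fun _ : m => (1 : ℂ))) = fun _ : m => (c : ℂ) := by
        funext i; simp
      rw [← Matrix.diagonal_one, ← Matrix.diagonal_smul, hs]
    rw [hc1, Matrix.mul_smul, Matrix.smul_mul, mul_one, hU2]
  have hdiag : (Matrix.diagonal (fun i => ((c - d i : ℝ) : ℂ)) : Matrix m m ℂ)
      = Matrix.diagonal (fun _ : m => (c : ℂ)) - Matrix.diagonal (fun i => ((d i : ℝ) : ℂ)) := by
    have hs2 : (fun i => ((c - d i : ℝ) : ℂ))
        = (fun i => (c : ℂ) - ((d i : ℝ) : ℂ)) := by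
      funext i
      push_cast
      ring
    rw [hs2, ← Matrix.diagonal_sub]
  rw [hM, hdiag, Matrix.mul_sub, Matrix.sub_mul, h1]

lemma herm_le_smul_iff {M : Matrix m m ℂ} (hM : M.IsHermitian) (c : ℝ) :
    ((c : ℂ) • (1 : Matrix m m ℂ) - M).PosSemidef ↔ ∀ i, hM.eigenvalues i ≤ c := by
  rw [smul_one_sub_conj (hM.eigenvectorUnitary).2 c hM.spectral_theorem,
    unitary_conj_diag_psd_iff (hM.eigenvectorUnitary).2]
  apply forall_congr'
  intro i
  rw [Complex.zero_le_real, sub_nonneg]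
  simp [Algebra.algebraMap_self]

lemma opNorm_nonneg (Y : Matrix m m ℂ) : 0 ≤ opNorm Y :=
  Real.iSup_nonneg fun _ => Real.sqrt_nonneg _

lemma psd_sq_conj {Y : Matrix m m ℂ} (hY : Y.PosSemidef) :
    Yᴴ * Y = (hY.1.eigenvectorUnitary : Matrix m m ℂ) *
      Matrix.diagonal (fun i => ((hY.1.eigenvalues i ^ 2 : ℝ) : ℂ)) *
      (star (hY.1.eigenvectorUnitary : Matrix m m ℂ)) := by
  rw [hY.1.eq]
  conv_lhs => rw [hY.1.spectral_theorem]
  simp only [Unitary.conjStarAlgAut_apply]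
  rw [unitary_conj_diag_mul (hY.1.eigenvectorUnitary).2]
  have hd : (fun i => ((RCLike.ofReal ∘ hY.1.eigenvalues : m → ℂ) i)
        * ((RCLike.ofReal ∘ hY.1.eigenvalues : m → ℂ) i))
      = fun i => ((hY.1.eigenvalues i ^ 2 : ℝ) : ℂ) := by
    funext i
    simp only [Function.comp_apply]
    have : (RCLike.ofReal (hY.1.eigenvalues i) : ℂ) = ((hY.1.eigenvalues i : ℝ) : ℂ) := rfl
    rw [this]
    push_cast
    ring
  rw [hd]

lemma opNorm_le_iff [Nonempty m] {Y : Matrix m m ℂ} (hY : Y.PosSemidef) {c : ℝ} (hc : 0 ≤ c) :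
    opNorm Y ≤ c ↔ ((c : ℂ) • (1 : Matrix m m ℂ) - Y).PosSemidef := by
  have hνnn : ∀ i, 0 ≤ (Matrix.posSemidef_conjTranspose_mul_self Y).1.eigenvalues i :=
    (Matrix.posSemidef_conjTranspose_mul_self Y).eigenvalues_nonneg
  have h1 : opNorm Y ≤ c ↔
      ∀ i, (Matrix.posSemidef_conjTranspose_mul_self Y).1.eigenvalues i ≤ c ^ 2 := by
    unfold opNorm
    constructor
    · intro h i
      have hb : Real.sqrt ((Matrix.posSemidef_conjTranspose_mul_self Y).1.eigenvalues i) ≤ c :=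
        le_trans (le_ciSup (f := fun j => Real.sqrt
          ((Matrix.posSemidef_conjTranspose_mul_self Y).1.eigenvalues j))
          (Set.Finite.bddAbove (Set.finite_range _)) i) h
      nlinarith [Real.sq_sqrt (hνnn i), Real.sqrt_nonneg
        ((Matrix.posSemidef_conjTranspose_mul_self Y).1.eigenvalues i)]
    · intro h
      apply ciSup_le
      intro i
      have := Real.sqrt_le_sqrt (h i)
      rwa [Real.sqrt_sq hc] at this
  have h2 : (∀ i, (Matrix.posSemidef_conjTranspose_mul_self Y).1.eigenvalues i ≤ c ^ 2) ↔
      (((c ^ 2 : ℝ) : ℂ) • (1 : Matrix m m ℂ) - Yᴴ * Y).PosSemidef :=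
    (herm_le_smul_iff (Matrix.posSemidef_conjTranspose_mul_self Y).1 (c ^ 2)).symm
  have h3 : (((c ^ 2 : ℝ) : ℂ) • (1 : Matrix m m ℂ) - Yᴴ * Y).PosSemidef ↔
      ∀ i, hY.1.eigenvalues i ≤ c := by
    rw [smul_one_sub_conj (hY.1.eigenvectorUnitary).2 (c ^ 2) (psd_sq_conj hY),
      unitary_conj_diag_psd_iff (hY.1.eigenvectorUnitary).2]
    apply forall_congr'
    intro i
    rw [Complex.zero_le_real, sub_nonneg]
    have hμ := hY.eigenvalues_nonneg i
    constructor
    · intro h; nlinarith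
    · intro h; nlinarith
  rw [h1, h2, h3, herm_le_smul_iff hY.1 c]

lemma real_smul_one_posDef {c : ℝ} (hc : 0 < c) :
    (((c : ℝ) : ℂ) • (1 : Matrix m m ℂ)).PosDef := by
  have hc1 : ((c : ℂ) • (1 : Matrix m m ℂ)) = Matrix.diagonal (fun _ : m => (c : ℂ)) := by
    have hs : ((c : ℂ) • (fun _ : m => (1 : ℂ))) = fun _ : m => (c : ℂ) := by
      funext i; simp
    rw [← Matrix.diagonal_one, ← Matrix.diagonal_smul, hs]
  rw [hc1]
  exact Matrix.posDef_diagonal_iff.mpr fun i => Complex.zero_lt_real.mpr hc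

lemma kron_conjTranspose {a b : Type*} (A : Matrix a a ℂ) (B : Matrix b b ℂ) :
    (A ⊗ₖ B)ᴴ = Aᴴ ⊗ₖ Bᴴ := by
  ext ⟨i, j⟩ ⟨k, l⟩
  simp [Matrix.conjTranspose_apply, Matrix.kroneckerMap_apply, mul_comm]

lemma conj_kron_psd_iff {a b : Type*} [Fintype a] [DecidableEq a] [Fintype b] [DecidableEq b]
    {σ : Matrix b b ℂ} (hσ : σ.PosDef) (X : Matrix (a × b) (a × b) ℂ) (c : ℝ) :
    ((c : ℂ) • ((1 : Matrix a a ℂ) ⊗ₖ σ) - X).PosSemidef ↔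
    ((c : ℂ) • (1 : Matrix (a × b) (a × b) ℂ) -
      ((1 : Matrix a a ℂ) ⊗ₖ mpow σ (-(1/2))) * X *
      ((1 : Matrix a a ℂ) ⊗ₖ mpow σ (-(1/2)))).PosSemidef := by
  set S := mpow σ (-(1/2)) with hS
  set T := mpow σ (1/2) with hT
  have hermS : Sᴴ = S := mpow_isHermitian hσ.1 _
  have hermT : Tᴴ = T := mpow_isHermitian hσ.1 _
  have hTS : T * S = 1 := mpow_half_mul_neg_half hσ
  have hST : S * T = 1 := mpow_neg_half_mul_half hσ
  have hTT : T * T = σ := mpow_half_mul_half hσ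
  have hkS : ((1 : Matrix a a ℂ) ⊗ₖ S)ᴴ = (1 : Matrix a a ℂ) ⊗ₖ S := by
    rw [kron_conjTranspose, Matrix.conjTranspose_one, hermS]
  have hkT : ((1 : Matrix a a ℂ) ⊗ₖ T)ᴴ = (1 : Matrix a a ℂ) ⊗ₖ T := by
    rw [kron_conjTranspose, Matrix.conjTranspose_one, hermT]
  have hSσS : S * σ * S = 1 := by
    rw [← hTT]
    calc S * (T * T) * S = (S * T) * (T * S) := by noncomm_ring
      _ = 1 := by rw [hST, hTS, one_mul]
  constructor
  · intro h
    have h2 := h.mul_mul_conjTranspose_same ((1 : Matrix a a ℂ) ⊗ₖ S)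
    rw [hkS] at h2
    have heq : ((1 : Matrix a a ℂ) ⊗ₖ S) * ((c : ℂ) • ((1 : Matrix a a ℂ) ⊗ₖ σ) - X) *
        ((1 : Matrix a a ℂ) ⊗ₖ S) =
        (c : ℂ) • (1 : Matrix (a × b) (a × b) ℂ) -
          ((1 : Matrix a a ℂ) ⊗ₖ S) * X * ((1 : Matrix a a ℂ) ⊗ₖ S) := by
      rw [Matrix.mul_sub, Matrix.sub_mul]
      congr 1
      rw [Matrix.mul_smul, Matrix.smul_mul]
      congr 1
      rw [← Matrix.mul_kronecker_mul, ← Matrix.mul_kronecker_mul, one_mul, one_mul,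
        hSσS, Matrix.one_kronecker_one]
    rwa [heq] at h2
  · intro h
    have h2 := h.mul_mul_conjTranspose_same ((1 : Matrix a a ℂ) ⊗ₖ T)
    rw [hkT] at h2
    have heq : ((1 : Matrix a a ℂ) ⊗ₖ T) *
        ((c : ℂ) • (1 : Matrix (a × b) (a × b) ℂ) -
          ((1 : Matrix a a ℂ) ⊗ₖ S) * X * ((1 : Matrix a a ℂ) ⊗ₖ S)) *
        ((1 : Matrix a a ℂ) ⊗ₖ T) =
        (c : ℂ) • ((1 : Matrix a a ℂ) ⊗ₖ σ) - X := by
      rw [Matrix.mul_sub, Matrix.sub_mul]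
      congr 1
      · rw [Matrix.mul_smul, Matrix.smul_mul]
        congr 1
        rw [mul_one, ← Matrix.mul_kronecker_mul, one_mul, hTT]
      · calc ((1 : Matrix a a ℂ) ⊗ₖ T) *
            (((1 : Matrix a a ℂ) ⊗ₖ S) * X * ((1 : Matrix a a ℂ) ⊗ₖ S)) *
            ((1 : Matrix a a ℂ) ⊗ₖ T) =
            (((1 : Matrix a a ℂ) ⊗ₖ T) * ((1 : Matrix a a ℂ) ⊗ₖ S)) * X *
            (((1 : Matrix a a ℂ) ⊗ₖ S) * ((1 : Matrix a a ℂ) ⊗ₖ T)) := by noncomm_ring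
          _ = X := by
            rw [← Matrix.mul_kronecker_mul, ← Matrix.mul_kronecker_mul, one_mul,
              hTS, hST, Matrix.one_kronecker_one, one_mul, mul_one]
    rwa [heq] at h2

lemma psd_diag_entry_nonneg {M : Matrix m m ℂ} (h : M.PosSemidef) (i : m) :
    0 ≤ M i i := by
  exact h.diag_nonneg

lemma psd_trace_nonneg {M : Matrix m m ℂ} (h : M.PosSemidef) : 0 ≤ M.trace :=
  Finset.sum_nonneg fun i _ => psd_diag_entry_nonneg h i

lemma herm_trace_eq_sum {M : Matrix m m ℂ} (hM : M.IsHermitian) :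
    M.trace = ((∑ i, hM.eigenvalues i : ℝ) : ℂ) := by
  conv_lhs => rw [hM.spectral_theorem]
  rw [Unitary.conjStarAlgAut_apply]
  rw [Matrix.trace_mul_cycle]
  have h1 : star (hM.eigenvectorUnitary : Matrix m m ℂ) *
      (hM.eigenvectorUnitary : Matrix m m ℂ) = 1 :=
    (Unitary.mem_iff.mp (hM.eigenvectorUnitary).2).1
  rw [h1, one_mul, Matrix.trace_diagonal]
  push_cast
  simp [Function.comp]

end AuxLemmas

/-- For positive semidefinite `X_{AB}`,
`‖X‖_{S₁(B,S_∞(A))} = inf {λ | ∃ density σ_B, X ≤ λ 1_A ⊗ σ_B}`. -/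
theorem hmin_operator_duality {a b : Type*} [Fintype a] [DecidableEq a]
    [Fintype b] [DecidableEq b]
    (X : Matrix (a × b) (a × b) ℂ) (hX : X.PosSemidef) :
    sInf ((fun σ : Matrix b b ℂ =>
        opNorm (((1 : Matrix a a ℂ) ⊗ₖ mpow σ (-(1 / 2))) * X *
          ((1 : Matrix a a ℂ) ⊗ₖ mpow σ (-(1 / 2))))) '' {σ | σ.PosDef ∧ σ.trace = 1}) =
      sInf {lam : ℝ | ∃ σ : Matrix b b ℂ, IsDensity σ ∧
        (((lam : ℂ) • ((1 : Matrix a a ℂ) ⊗ₖ σ)) - X).PosSemidef} := by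
  classical
  by_cases hb : Nonempty b
  swap
  · -- b is empty : both sets are empty
    rw [not_nonempty_iff] at hb
    have htr : ∀ σ : Matrix b b ℂ, σ.trace = 0 := fun σ => by simp [Matrix.trace]
    have h1 : {σ : Matrix b b ℂ | σ.PosDef ∧ σ.trace = 1} = ∅ := by
      ext σ
      simp only [Set.mem_setOf_eq, Set.mem_empty_iff_false, iff_false, not_and]
      intro _ h
      exact zero_ne_one ((htr σ) ▸ h)
    have h2 : {lam : ℝ | ∃ σ : Matrix b b ℂ, IsDensity σ ∧
        (((lam : ℂ) • ((1 : Matrix a a ℂ) ⊗ₖ σ)) - X).PosSemidef} = ∅ := by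
      ext lam
      simp only [Set.mem_setOf_eq, Set.mem_empty_iff_false, iff_false, not_exists]
      rintro σ ⟨⟨-, h⟩, -⟩
      exact zero_ne_one ((htr σ) ▸ h)
    rw [h1, h2, Set.image_empty]
  · haveI := hb
    have hcb : (0 : ℝ) < (Fintype.card b : ℝ) := by exact_mod_cast Fintype.card_pos
    have hcbC : ((Fintype.card b : ℝ) : ℂ) ≠ 0 := by
      push_cast
      exact_mod_cast hcb.ne'
    set σ₀ : Matrix b b ℂ := (((Fintype.card b : ℝ)⁻¹ : ℝ) : ℂ) • (1 : Matrix b b ℂ) with hσ₀def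
    have hσ₀pd : σ₀.PosDef := real_smul_one_posDef (by positivity)
    have hσ₀tr : σ₀.trace = 1 := by
      rw [hσ₀def, Matrix.trace_smul, Matrix.trace_one, smul_eq_mul]
      push_cast
      field_simp
    by_cases ha : Nonempty a
    · -- main case
      haveI := ha
      haveI : Nonempty (a × b) := inferInstance
      -- lower bound for the RHS set
      have hTlow : ∀ lam : ℝ, (∃ σ : Matrix b b ℂ, IsDensity σ ∧
          (((lam : ℂ) • ((1 : Matrix a a ℂ) ⊗ₖ σ)) - X).PosSemidef) → 0 ≤ lam := by
        rintro lam ⟨σ, ⟨hσpsd, hσtr⟩, hP⟩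
        have h1 : 0 ≤ ((lam : ℂ) • ((1 : Matrix a a ℂ) ⊗ₖ σ) - X).trace := psd_trace_nonneg hP
        have h2 : 0 ≤ X.trace := psd_trace_nonneg hX
        have h3 : ((lam : ℂ) • ((1 : Matrix a a ℂ) ⊗ₖ σ) - X).trace =
            (lam : ℂ) * (Fintype.card a : ℂ) - X.trace := by
          rw [Matrix.trace_sub, Matrix.trace_smul, Matrix.trace_kronecker, Matrix.trace_one,
            hσtr, mul_one, smul_eq_mul]
        have h4 : 0 ≤ (lam : ℂ) * (Fintype.card a : ℂ) := by
          have h5 : (lam : ℂ) * (Fintype.card a : ℂ) =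
              (((lam : ℂ) • ((1 : Matrix a a ℂ) ⊗ₖ σ) - X).trace) + X.trace := by
            rw [h3]; ring
          rw [h5]
          exact add_nonneg h1 h2
        have h6 : (0 : ℝ) ≤ lam * (Fintype.card a : ℝ) := by
          have := (Complex.le_def.mp h4).1
          simpa using this
        have hca : (0 : ℝ) < (Fintype.card a : ℝ) := by exact_mod_cast Fintype.card_pos
        nlinarith
      have hSbd : BddBelow ((fun σ : Matrix b b ℂ =>
          opNorm (((1 : Matrix a a ℂ) ⊗ₖ mpow σ (-(1 / 2))) * X *
            ((1 : Matrix a a ℂ) ⊗ₖ mpow σ (-(1 / 2))))) '' {σ | σ.PosDef ∧ σ.trace = 1}) := by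
        refine ⟨0, ?_⟩
        rintro v ⟨σ, -, rfl⟩
        exact opNorm_nonneg _
      have hTbd : BddBelow {lam : ℝ | ∃ σ : Matrix b b ℂ, IsDensity σ ∧
          (((lam : ℂ) • ((1 : Matrix a a ℂ) ⊗ₖ σ)) - X).PosSemidef} :=
        ⟨0, fun lam hlam => hTlow lam hlam⟩
      have hSne : ((fun σ : Matrix b b ℂ =>
          opNorm (((1 : Matrix a a ℂ) ⊗ₖ mpow σ (-(1 / 2))) * X *
            ((1 : Matrix a a ℂ) ⊗ₖ mpow σ (-(1 / 2))))) ''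
            {σ | σ.PosDef ∧ σ.trace = 1}).Nonempty :=
        ⟨_, ⟨σ₀, ⟨hσ₀pd, hσ₀tr⟩, rfl⟩⟩
      have hTne : {lam : ℝ | ∃ σ : Matrix b b ℂ, IsDensity σ ∧
          (((lam : ℂ) • ((1 : Matrix a a ℂ) ⊗ₖ σ)) - X).PosSemidef}.Nonempty := by
        refine ⟨(Fintype.card b : ℝ) * X.trace.re, σ₀, ⟨hσ₀pd.posSemidef, hσ₀tr⟩, ?_⟩
        have hk : (((Fintype.card b : ℝ) * X.trace.re : ℝ) : ℂ) • ((1 : Matrix a a ℂ) ⊗ₖ σ₀) =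
            ((X.trace.re : ℝ) : ℂ) • (1 : Matrix (a × b) (a × b) ℂ) := by
          rw [hσ₀def, Matrix.kronecker_smul, Matrix.one_kronecker_one, smul_smul]
          congr 1
          push_cast
          field_simp
        rw [hk]
        apply (herm_le_smul_iff hX.1 X.trace.re).mpr
        intro i
        have hsum := herm_trace_eq_sum hX.1
        have htre : X.trace.re = ∑ j, hX.1.eigenvalues j := by
          rw [hsum]
          simp
        rw [htre]
        exact Finset.single_le_sum (fun j _ => hX.eigenvalues_nonneg j) (Finset.mem_univ i)
      apply le_antisymm
      · -- sInf S ≤ sInf T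
        apply le_csInf hTne
        rintro lam ⟨σ, ⟨hσpsd, hσtr⟩, hP⟩
        have hlam0 : 0 ≤ lam := hTlow lam ⟨σ, ⟨hσpsd, hσtr⟩, hP⟩
        refine le_of_forall_pos_le_add ?_
        intro ε hε
        set δ : ℝ := ε / (lam + ε + 1) with hδdef
        have hδ0 : 0 < δ := by positivity
        have hδ1 : δ < 1 := by
          rw [hδdef, div_lt_one (by linarith)]
          linarith
        have h1δ : 0 < 1 - δ := by linarith
        set lam' : ℝ := lam / (1 - δ) with hlam'def
        have hlam'0 : 0 ≤ lam' := div_nonneg hlam0 h1δ.le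
        have hlam'le : lam' ≤ lam + ε := by
          rw [hlam'def, div_le_iff₀ h1δ]
          have hδa : δ * (lam + ε) ≤ ε := by
            rw [hδdef, div_mul_eq_mul_div, div_le_iff₀ (by linarith)]
            nlinarith
          nlinarith
        set σ' : Matrix b b ℂ := ((1 - δ : ℝ) : ℂ) • σ +
          (((δ / (Fintype.card b : ℝ)) : ℝ) : ℂ) • (1 : Matrix b b ℂ) with hσ'def
        have hσ'pd : σ'.PosDef :=
          Matrix.PosDef.posSemidef_add (psd_smul hσpsd h1δ.le) (real_smul_one_posDef (by positivity))
        have hσ'tr : σ'.trace = 1 := by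
          rw [hσ'def, Matrix.trace_add, Matrix.trace_smul, Matrix.trace_smul, hσtr,
            Matrix.trace_one, smul_eq_mul, smul_eq_mul, mul_one]
          push_cast
          field_simp
          ring
        have hkey : ((lam' : ℂ) • ((1 : Matrix a a ℂ) ⊗ₖ σ') - X).PosSemidef := by
          have e1 : (lam' : ℂ) * ((1 - δ : ℝ) : ℂ) = (lam : ℂ) := by
            have hδC : ((1 : ℂ) - (δ : ℂ)) ≠ 0 := by
              have : ((1 - δ : ℝ) : ℂ) ≠ 0 := by exact_mod_cast h1δ.ne'
              push_cast at this
              exact this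
            rw [hlam'def]
            push_cast
            field_simp
          have e2 : (lam' : ℂ) * (((δ / (Fintype.card b : ℝ)) : ℝ) : ℂ) =
              ((lam' * (δ / (Fintype.card b : ℝ)) : ℝ) : ℂ) := by push_cast; ring
          have hrw : ((lam' : ℂ) • ((1 : Matrix a a ℂ) ⊗ₖ σ') - X) =
              (((lam : ℂ) • ((1 : Matrix a a ℂ) ⊗ₖ σ)) - X) +
                ((lam' * (δ / (Fintype.card b : ℝ)) : ℝ) : ℂ) •
                  (1 : Matrix (a × b) (a × b) ℂ) := by
            rw [hσ'def, Matrix.kronecker_add, Matrix.kronecker_smul, Matrix.kronecker_smul,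
              Matrix.one_kronecker_one, smul_add, smul_smul, smul_smul, e1, e2]
            abel
          rw [hrw]
          exact hP.add (psd_smul Matrix.PosSemidef.one (by positivity))
        have hconj := (conj_kron_psd_iff hσ'pd X lam').mp hkey
        have hY'psd : (((1 : Matrix a a ℂ) ⊗ₖ mpow σ' (-(1 / 2))) * X *
            ((1 : Matrix a a ℂ) ⊗ₖ mpow σ' (-(1 / 2)))).PosSemidef := by
          have h2 := hX.mul_mul_conjTranspose_same ((1 : Matrix a a ℂ) ⊗ₖ mpow σ' (-(1 / 2)))
          rwa [kron_conjTranspose, Matrix.conjTranspose_one,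
            (mpow_isHermitian hσ'pd.1 (-(1 / 2))).eq] at h2
        have hop : opNorm (((1 : Matrix a a ℂ) ⊗ₖ mpow σ' (-(1 / 2))) * X *
            ((1 : Matrix a a ℂ) ⊗ₖ mpow σ' (-(1 / 2)))) ≤ lam' :=
          (opNorm_le_iff hY'psd hlam'0).mpr hconj
        calc sInf ((fun σ : Matrix b b ℂ =>
            opNorm (((1 : Matrix a a ℂ) ⊗ₖ mpow σ (-(1 / 2))) * X *
              ((1 : Matrix a a ℂ) ⊗ₖ mpow σ (-(1 / 2))))) '' {σ | σ.PosDef ∧ σ.trace = 1})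
            ≤ opNorm (((1 : Matrix a a ℂ) ⊗ₖ mpow σ' (-(1 / 2))) * X *
              ((1 : Matrix a a ℂ) ⊗ₖ mpow σ' (-(1 / 2)))) :=
              csInf_le hSbd ⟨σ', ⟨hσ'pd, hσ'tr⟩, rfl⟩
          _ ≤ lam' := hop
          _ ≤ lam + ε := hlam'le
      · -- sInf T ≤ sInf S
        apply le_csInf hSne
        rintro v ⟨σ, ⟨hσpd, hσtr⟩, rfl⟩
        have hYpsd : (((1 : Matrix a a ℂ) ⊗ₖ mpow σ (-(1 / 2))) * X *
            ((1 : Matrix a a ℂ) ⊗ₖ mpow σ (-(1 / 2)))).PosSemidef := by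
          have h2 := hX.mul_mul_conjTranspose_same ((1 : Matrix a a ℂ) ⊗ₖ mpow σ (-(1 / 2)))
          rwa [kron_conjTranspose, Matrix.conjTranspose_one,
            (mpow_isHermitian hσpd.1 (-(1 / 2))).eq] at h2
        have hc0 : 0 ≤ opNorm (((1 : Matrix a a ℂ) ⊗ₖ mpow σ (-(1 / 2))) * X *
            ((1 : Matrix a a ℂ) ⊗ₖ mpow σ (-(1 / 2)))) := opNorm_nonneg _
        have h1 := (opNorm_le_iff hYpsd hc0).mp le_rfl
        have h2 := (conj_kron_psd_iff hσpd X _).mpr h1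
        exact csInf_le hTbd ⟨σ, ⟨hσpd.posSemidef, hσtr⟩, h2⟩
    · -- a is empty
      rw [not_nonempty_iff] at ha
      haveI : IsEmpty (a × b) := inferInstance
      have hall : ∀ M : Matrix (a × b) (a × b) ℂ, M.PosSemidef := by
        intro M
        constructor
        · ext i j
          exact isEmptyElim i
        · intro x
          rw [Subsingleton.elim x 0]
          simp
      have hval : ∀ M : Matrix (a × b) (a × b) ℂ, opNorm M = 0 := by
        intro M
        simp [opNorm]
      have himg : ((fun σ : Matrix b b ℂ =>
          opNorm (((1 : Matrix a a ℂ) ⊗ₖ mpow σ (-(1 / 2))) * X *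
            ((1 : Matrix a a ℂ) ⊗ₖ mpow σ (-(1 / 2))))) ''
            {σ | σ.PosDef ∧ σ.trace = 1}) = {0} := by
        apply Set.eq_singleton_iff_unique_mem.mpr
        constructor
        · exact ⟨σ₀, ⟨hσ₀pd, hσ₀tr⟩, hval _⟩
        · rintro x ⟨σ, -, rfl⟩
          exact hval _
      have hnb : ¬ BddBelow {lam : ℝ | ∃ σ : Matrix b b ℂ, IsDensity σ ∧
          (((lam : ℂ) • ((1 : Matrix a a ℂ) ⊗ₖ σ)) - X).PosSemidef} := by
        rintro ⟨c, hc⟩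
        have h1 := hc (show c - 1 ∈ _ from ⟨σ₀, ⟨hσ₀pd.posSemidef, hσ₀tr⟩, hall _⟩)
        linarith
      rw [himg, csInf_singleton, Real.sInf_of_not_bddBelow hnb]

end
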